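/- For every word w ∈ W_* = ⋃_{m≥0} {1,2,3,4}^m, all λ_1, λ_2 ∈ (0,1/2), and every nonempty closed set A ⊆ ▲, one has δ(F_{w,λ_1}(A), F_{w,λ_2}(A)) ≤ 2|λ_1 − λ_2|, where δ denotes the Hausdorff distance on nonempty compact subsets of ℝ². In particular, |F_{w,λ_1}(p_i) − F_{w,λ_2}(p_i)| ≤ 2|λ_1 − λ_2| for i = 1,2,3. -/

import Mathlib

open Filter Topology

noncomputable section

/-- The Euclidean plane. -/
abbrev E2 : Type := EuclideanSpace ℝ (Fin 2)

/-- The point of the Euclidean plane with coordinates `(a, b)`. -/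
def e2 (a b : ℝ) : E2 := (WithLp.equiv 2 (Fin 2 → ℝ)).symm ![a, b]

/-- The vertices `p₁ = (1/2, √3/2)`, `p₂ = (0,0)`, `p₃ = (1,0)` of the
equilateral triangle (indexed by `0, 1, 2`). -/
def pt : Fin 3 → E2 :=
  ![e2 (1 / 2) (Real.sqrt 3 / 2), e2 0 0, e2 1 0]

/-- The map `F_{4,λ}`: the orientation-preserving similarity of the plane
sending `p₁, p₂, p₃` to `(1/4+λ, √3/4)`, `(1/2−λ/2, √3 λ/2)`,
`(3/4−λ/2, √3/4−√3 λ/2)` respectively; in complex coordinates it is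
`z ↦ a z + b` with `a = 1/4 + i √3 (1/4 − λ)`, `b = (1/2 − λ/2) + i √3 λ/2`. -/
def F4 (lam : ℝ) (x : E2) : E2 :=
  e2 ((1 / 4) * x 0 - Real.sqrt 3 * (1 / 4 - lam) * x 1 + (1 / 2 - lam / 2))
     (Real.sqrt 3 * (1 / 4 - lam) * x 0 + (1 / 4) * x 1 + Real.sqrt 3 * lam / 2)

/-- The four maps of the iterated function system of `AG_λ`:
`F_{i,λ}(x) = (x + p_i)/2` for `i = 0,1,2` and `F_{3,λ} = F_{4,λ}`. -/
def Fmap (lam : ℝ) : Fin 4 → E2 → E2 :=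
  ![fun x => (2⁻¹ : ℝ) • (x + pt 0),
    fun x => (2⁻¹ : ℝ) • (x + pt 1),
    fun x => (2⁻¹ : ℝ) • (x + pt 2),
    F4 lam]

/-- Rotation by `2π/3` about the centroid `(1/2, √3/6)` of the triangle;
it generates the symmetry group `G` (of order 3) of rotations acting as `A₃`
on `{p₁, p₂, p₃}`. -/
def rot3 (x : E2) : E2 :=
  e2 (-(1 / 2) * (x 0 - 1 / 2) - (Real.sqrt 3 / 2) * (x 1 - Real.sqrt 3 / 6) + 1 / 2)
     ((Real.sqrt 3 / 2) * (x 0 - 1 / 2) - (1 / 2) * (x 1 - Real.sqrt 3 / 6) + Real.sqrt 3 / 6)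

/-- The closed triangle `▲` with vertices `p₁, p₂, p₃`. -/
def Tri : Set E2 := convexHull ℝ {pt 0, pt 1, pt 2}

/-- `K` is the attractor `AG_λ` of the iterated function system `{F_{i,λ}}`,
i.e. the unique nonempty compact set with `K = ⋃ᵢ F_{i,λ}(K)`. -/
def IsAG (lam : ℝ) (K : Set E2) : Prop :=
  K.Nonempty ∧ IsCompact K ∧ K = ⋃ i : Fin 4, Fmap lam i '' K


/-- The composition `F_{w,λ} = F_{w₁,λ} ∘ ⋯ ∘ F_{w_m,λ}` for a word
`w ∈ W_* = ⋃_m {1,2,3,4}^m` (with `F_{∅,λ} = id`). -/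
def Fword (lam : ℝ) : List (Fin 4) → E2 → E2
  | [] => id
  | i :: w => Fmap lam i ∘ Fword lam w

end

noncomputable section

namespace Stmt9Aux

def T' : Set E2 :=
  {x | 0 ≤ x 1 ∧ x 1 ≤ Real.sqrt 3 * x 0 ∧ x 1 ≤ Real.sqrt 3 * (1 - x 0)}

lemma s_sq : Real.sqrt 3 ^ 2 = 3 := Real.sq_sqrt (by norm_num)
lemma s_pos : (0:ℝ) < Real.sqrt 3 := Real.sqrt_pos.2 (by norm_num)

lemma dist_coords (x y : E2) :
    dist x y = Real.sqrt ((x 0 - y 0)^2 + (x 1 - y 1)^2) := by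
  rw [EuclideanSpace.dist_eq]
  simp [Fin.sum_univ_two, Real.dist_eq, sq_abs]

lemma sqrt_le_of_sq {a r : ℝ} (hr : 0 ≤ r) (h : a ≤ r ^ 2) : Real.sqrt a ≤ r := by
  calc Real.sqrt a ≤ Real.sqrt (r ^ 2) := Real.sqrt_le_sqrt h
  _ = r := Real.sqrt_sq hr

lemma convex_T' : Convex ℝ T' := by
  intro x hx y hy a b ha hb hab
  obtain ⟨hx1, hx2, hx3⟩ := hx
  obtain ⟨hy1, hy2, hy3⟩ := hy
  have e0 : (a • x + b • y) 0 = a * x 0 + b * y 0 := by simp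
  have e1 : (a • x + b • y) 1 = a * x 1 + b * y 1 := by simp
  refine ⟨?_, ?_, ?_⟩ <;> rw [e1] <;> try rw [e0]
  · positivity
  · nlinarith [mul_nonneg ha (sub_nonneg.2 hx2), mul_nonneg hb (sub_nonneg.2 hy2)]
  · nlinarith [mul_nonneg ha (sub_nonneg.2 hx3), mul_nonneg hb (sub_nonneg.2 hy3)]

lemma pt_mem_T' (i : Fin 3) : pt i ∈ T' := by
  have h := s_pos
  have h3 := s_sq
  fin_cases i <;> refine ⟨?_, ?_, ?_⟩ <;> simp [pt, e2, T'] <;> nlinarith [s_sq, s_pos]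

lemma Tri_subset_T' : Tri ⊆ T' := by
  apply convexHull_min _ convex_T'
  intro x hx
  rcases hx with h | h | h <;> subst h
  · exact pt_mem_T' 0
  · exact pt_mem_T' 1
  · exact pt_mem_T' 2

lemma T'_bounds {x : E2} (hx : x ∈ T') :
    0 ≤ x 0 ∧ x 0 ≤ 1 ∧ 0 ≤ x 1 ∧ x 1 ≤ Real.sqrt 3 / 2 := by
  obtain ⟨h1, h2, h3⟩ := hx
  have hs := s_pos
  have hs3 := s_sq
  refine ⟨by nlinarith, by nlinarith, h1, by nlinarith⟩

lemma F4_mem {lam : ℝ} (hl : lam ∈ Set.Icc (0:ℝ) (1/2)) {x : E2} (hx : x ∈ T') :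
    F4 lam x ∈ T' := by
  obtain ⟨hl0, hl2⟩ := hl
  have hs := s_pos
  have hs3 := s_sq
  obtain ⟨h1, h2, h3⟩ := hx
  obtain ⟨hx0, hx1, -, hxs⟩ := T'_bounds ⟨h1, h2, h3⟩
  refine ⟨?_, ?_, ?_⟩ <;>
    simp only [F4, e2, WithLp.equiv_symm_apply, PiLp.toLp_apply, Matrix.cons_val_zero,
      Matrix.cons_val_one, Matrix.head_cons]
  · nlinarith [mul_nonneg (by linarith : (0:ℝ) ≤ 1 - 2*lam)
        (by nlinarith : 0 ≤ Real.sqrt 3 * x 0 + x 1),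
      mul_nonneg hl0 (by nlinarith : 0 ≤ x 1 + Real.sqrt 3 * (1 - x 0))]
  · have hv : Real.sqrt 3 ^ 2 * ((1/4 - lam) * x 1) = 3 * ((1/4 - lam) * x 1) := by
      rw [hs3]
    nlinarith [mul_nonneg (by linarith : (0:ℝ) ≤ 1 - 2*lam)
        (by nlinarith : 0 ≤ Real.sqrt 3 / 2 - x 1),
      mul_nonneg hl0 (by nlinarith : 0 ≤ x 1 + Real.sqrt 3 * x 0), hv]
  · have hv : Real.sqrt 3 ^ 2 * ((1/4 - lam) * x 1) = 3 * ((1/4 - lam) * x 1) := by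
      rw [hs3]
    nlinarith [mul_nonneg (by linarith : (0:ℝ) ≤ 1 - 2*lam)
        (by nlinarith : 0 ≤ Real.sqrt 3 * (1 - x 0) + x 1),
      mul_nonneg hl0 (by nlinarith : 0 ≤ Real.sqrt 3 - 2 * x 1), hv]

lemma Fmap_mem {lam : ℝ} (hl : lam ∈ Set.Icc (0:ℝ) (1/2)) (i : Fin 4)
    {x : E2} (hx : x ∈ T') : Fmap lam i x ∈ T' := by
  have half : ∀ p ∈ T', (2⁻¹ : ℝ) • (x + p) ∈ T' := by
    intro p hp
    rw [smul_add]
    exact convex_T' hx hp (by norm_num) (by norm_num) (by norm_num)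
  fin_cases i
  · exact half (pt 0) (pt_mem_T' 0)
  · exact half (pt 1) (pt_mem_T' 1)
  · exact half (pt 2) (pt_mem_T' 2)
  · exact F4_mem ⟨hl.1, hl.2⟩ hx

lemma Fword_mem {lam : ℝ} (hl : lam ∈ Set.Icc (0:ℝ) (1/2)) (w : List (Fin 4))
    {x : E2} (hx : x ∈ T') : Fword lam w x ∈ T' := by
  induction w with
  | nil => exact hx
  | cons i w ih => exact Fmap_mem hl i ih

lemma F4_lip {lam : ℝ} (hl : lam ∈ Set.Icc (0:ℝ) (1/2)) (a b : E2) :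
    dist (F4 lam a) (F4 lam b) ≤ (1/2) * dist a b := by
  obtain ⟨hl0, hl2⟩ := hl
  have hs3 := s_sq
  rw [dist_coords, dist_coords]
  have key : (F4 lam a 0 - F4 lam b 0)^2 + (F4 lam a 1 - F4 lam b 1)^2 ≤
      (1/4) * ((a 0 - b 0)^2 + (a 1 - b 1)^2) := by
    simp only [F4, e2, WithLp.equiv_symm_apply, PiLp.toLp_apply, Matrix.cons_val_zero,
      Matrix.cons_val_one, Matrix.head_cons]
    nlinarith [mul_nonneg (by nlinarith : (0:ℝ) ≤ 3 * (1/16 - (1/4 - lam)^2))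
      (by positivity : (0:ℝ) ≤ (a 0 - b 0)^2 + (a 1 - b 1)^2)]
  calc Real.sqrt ((F4 lam a 0 - F4 lam b 0)^2 + (F4 lam a 1 - F4 lam b 1)^2)
      ≤ Real.sqrt ((1/4) * ((a 0 - b 0)^2 + (a 1 - b 1)^2)) := Real.sqrt_le_sqrt key
    _ = (1/2) * Real.sqrt ((a 0 - b 0)^2 + (a 1 - b 1)^2) := by
        rw [show (1/4 : ℝ) = (1/2)^2 by norm_num, Real.sqrt_mul (by positivity),
          Real.sqrt_sq (by norm_num)]

lemma F4_param (lam₁ lam₂ : ℝ) {y : E2} (hy : y ∈ T') :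
    dist (F4 lam₁ y) (F4 lam₂ y) ≤ |lam₁ - lam₂| := by
  have hs3 := s_sq
  have hs := s_pos
  obtain ⟨h1, h2, h3⟩ := hy
  rw [dist_coords]
  apply sqrt_le_of_sq (abs_nonneg _)
  rw [sq_abs]
  simp only [F4, e2, WithLp.equiv_symm_apply, PiLp.toLp_apply, Matrix.cons_val_zero,
    Matrix.cons_val_one, Matrix.head_cons]
  have hsum : Real.sqrt 3 - 2 * y 1 ≥ 0 := by nlinarith
  have hvv : y 1 * y 1 ≤ 3 * (y 0 * (1 - y 0)) := by
    have hmul : y 1 * y 1 ≤ (Real.sqrt 3 * y 0) * (Real.sqrt 3 * (1 - y 0)) :=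
      mul_le_mul h2 h3 h1 (by nlinarith)
    have hu : Real.sqrt 3 ^ 2 * (y 0 * (1 - y 0)) = 3 * (y 0 * (1 - y 0)) := by rw [hs3]
    nlinarith [hmul, hu]
  have hv2 : 2 * (y 1 * y 1) ≤ Real.sqrt 3 * y 1 := by
    nlinarith [mul_nonneg h1 hsum]
  have hvsq : Real.sqrt 3 ^ 2 * (y 1 * y 1) = 3 * (y 1 * y 1) := by rw [hs3]
  have hf : (Real.sqrt 3 * y 1 - 1/2)^2 + 3 * (1/2 - y 0)^2 ≤ 1 := by
    nlinarith [hvv, hv2, hvsq]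
  calc (1 / 4 * y 0 - Real.sqrt 3 * (1 / 4 - lam₁) * y 1 + (1 / 2 - lam₁ / 2) -
          (1 / 4 * y 0 - Real.sqrt 3 * (1 / 4 - lam₂) * y 1 + (1 / 2 - lam₂ / 2))) ^ 2 +
        (Real.sqrt 3 * (1 / 4 - lam₁) * y 0 + 1 / 4 * y 1 + Real.sqrt 3 * lam₁ / 2 -
          (Real.sqrt 3 * (1 / 4 - lam₂) * y 0 + 1 / 4 * y 1 + Real.sqrt 3 * lam₂ / 2)) ^ 2
      = (lam₁ - lam₂)^2 * ((Real.sqrt 3 * y 1 - 1/2)^2 + Real.sqrt 3 ^ 2 * (1/2 - y 0)^2) := by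
        ring
    _ = (lam₁ - lam₂)^2 * ((Real.sqrt 3 * y 1 - 1/2)^2 + 3 * (1/2 - y 0)^2) := by rw [hs3]
    _ ≤ (lam₁ - lam₂)^2 * 1 :=
        mul_le_mul_of_nonneg_left hf (sq_nonneg _)
    _ = (lam₁ - lam₂)^2 := by ring

lemma key_dist {lam₁ lam₂ : ℝ} (h₁ : lam₁ ∈ Set.Icc (0:ℝ) (1/2))
    (h₂ : lam₂ ∈ Set.Icc (0:ℝ) (1/2)) (w : List (Fin 4)) {x : E2} (hx : x ∈ T') :
    dist (Fword lam₁ w x) (Fword lam₂ w x) ≤ 2 * |lam₁ - lam₂| := by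
  induction w with
  | nil =>
    simp only [Fword, id]
    rw [dist_self]
    positivity
  | cons i w ih =>
    have hy₁ : Fword lam₁ w x ∈ T' := Fword_mem h₁ w hx
    have hy₂ : Fword lam₂ w x ∈ T' := Fword_mem h₂ w hx
    set y₁ := Fword lam₁ w x
    set y₂ := Fword lam₂ w x
    show dist (Fmap lam₁ i y₁) (Fmap lam₂ i y₂) ≤ 2 * |lam₁ - lam₂|
    fin_cases i
    · show dist ((2⁻¹:ℝ) • (y₁ + pt 0)) ((2⁻¹:ℝ) • (y₂ + pt 0)) ≤ _
      rw [dist_smul₀, dist_add_right]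
      have := dist_nonneg (x := y₁) (y := y₂)
      simp only [Real.norm_eq_abs]
      rw [abs_of_pos (by norm_num : (0:ℝ) < 2⁻¹)]
      linarith
    · show dist ((2⁻¹:ℝ) • (y₁ + pt 1)) ((2⁻¹:ℝ) • (y₂ + pt 1)) ≤ _
      rw [dist_smul₀, dist_add_right]
      have := dist_nonneg (x := y₁) (y := y₂)
      simp only [Real.norm_eq_abs]
      rw [abs_of_pos (by norm_num : (0:ℝ) < 2⁻¹)]
      linarith
    · show dist ((2⁻¹:ℝ) • (y₁ + pt 2)) ((2⁻¹:ℝ) • (y₂ + pt 2)) ≤ _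
      rw [dist_smul₀, dist_add_right]
      have := dist_nonneg (x := y₁) (y := y₂)
      simp only [Real.norm_eq_abs]
      rw [abs_of_pos (by norm_num : (0:ℝ) < 2⁻¹)]
      linarith
    · show dist (F4 lam₁ y₁) (F4 lam₂ y₂) ≤ _
      calc dist (F4 lam₁ y₁) (F4 lam₂ y₂)
          ≤ dist (F4 lam₁ y₁) (F4 lam₁ y₂) + dist (F4 lam₁ y₂) (F4 lam₂ y₂) :=
            dist_triangle _ _ _
        _ ≤ (1/2) * dist y₁ y₂ + |lam₁ - lam₂| :=
            add_le_add (F4_lip h₁ y₁ y₂) (F4_param lam₁ lam₂ hy₂)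
        _ ≤ 2 * |lam₁ - lam₂| := by linarith

end Stmt9Aux
end

/-- For every word `w ∈ W_*`, all `λ₁, λ₂ ∈ (0,1/2)` and every
nonempty closed `A ⊆ ▲`, the Hausdorff distance between `F_{w,λ₁}(A)` and
`F_{w,λ₂}(A)` is at most `2|λ₁ − λ₂|`; in particular
`dist (F_{w,λ₁}(pᵢ), F_{w,λ₂}(pᵢ)) ≤ 2|λ₁ − λ₂|` for `i = 1,2,3`. -/
theorem stmt9 (w : List (Fin 4)) (lam₁ lam₂ : ℝ)
    (h₁ : lam₁ ∈ Set.Ioo (0:ℝ) (1/2)) (h₂ : lam₂ ∈ Set.Ioo (0:ℝ) (1/2))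
    (A : Set E2) (hne : A.Nonempty) (hcl : IsClosed A) (hsub : A ⊆ Tri) :
    Metric.hausdorffDist (Fword lam₁ w '' A) (Fword lam₂ w '' A) ≤ 2 * |lam₁ - lam₂| ∧
    ∀ i : Fin 3, dist (Fword lam₁ w (pt i)) (Fword lam₂ w (pt i)) ≤ 2 * |lam₁ - lam₂| := by
  have h₁' : lam₁ ∈ Set.Icc (0:ℝ) (1/2) := ⟨h₁.1.le, h₁.2.le⟩
  have h₂' : lam₂ ∈ Set.Icc (0:ℝ) (1/2) := ⟨h₂.1.le, h₂.2.le⟩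
  have hr : (0:ℝ) ≤ 2 * |lam₁ - lam₂| := by positivity
  constructor
  · apply Metric.hausdorffDist_le_of_mem_dist hr
    · rintro x ⟨a, ha, rfl⟩
      exact ⟨Fword lam₂ w a, Set.mem_image_of_mem _ ha,
        Stmt9Aux.key_dist h₁' h₂' w (Stmt9Aux.Tri_subset_T' (hsub ha))⟩
    · rintro x ⟨a, ha, rfl⟩
      refine ⟨Fword lam₁ w a, Set.mem_image_of_mem _ ha, ?_⟩
      rw [dist_comm]
      exact Stmt9Aux.key_dist h₁' h₂' w (Stmt9Aux.Tri_subset_T' (hsub ha))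
  · intro i
    exact Stmt9Aux.key_dist h₁' h₂' w (Stmt9Aux.pt_mem_T' i)
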